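/- If T is a standard Cauchy random variable with distribution function C(x) = (1/π)arctan(x) + 1/2, then |T| is InvSub: the function x ↦ 1 - F_{|T|}(1/x) = 1 - (2/π)arctan(1/x) is subadditive on (0,∞). -/

import Mathlib

open MeasureTheory Set Real

lemma arctan_subadd {x y : ℝ} (hx : 0 < x) (hy : 0 < y) :
    Real.arctan (x + y) ≤ Real.arctan x + Real.arctan y := by
  have h : (x + y) * (-y) < 1 := by nlinarith
  have key := Real.arctan_add h
  rw [Real.arctan_neg] at key
  have hd : (1 : ℝ) ≤ 1 - (x + y) * (-y) := by nlinarith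
  have harg : (x + y + -y) / (1 - (x + y) * (-y)) ≤ x := by
    rw [show x + y + -y = x by ring, div_le_iff₀ (by linarith)]
    nlinarith
  have := Real.arctan_strictMono.monotone harg
  linarith [this, key]

lemma lt_cdf {Ω : Type*} [MeasurableSpace Ω] (μ : Measure Ω) [IsProbabilityMeasure μ]
    (T : Ω → ℝ) (hT : Measurable T)
    (hC : ∀ x : ℝ, (μ {ω | T ω ≤ x}).toReal = (1 / Real.pi) * Real.arctan x + 1 / 2)
    (a : ℝ) : (μ {ω | T ω < a}).toReal = (1 / Real.pi) * Real.arctan a + 1 / 2 := by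
  have hU : {ω | T ω < a} = ⋃ n : ℕ, {ω | T ω ≤ a - 1 / (n + 1)} := by
    ext ω
    simp only [mem_setOf_eq, mem_iUnion]
    constructor
    · intro h
      obtain ⟨n, hn⟩ := exists_nat_one_div_lt (show (0:ℝ) < a - T ω by linarith)
      exact ⟨n, by linarith⟩
    · rintro ⟨n, hn⟩
      have : (0:ℝ) < 1 / (n + 1) := by positivity
      linarith
  have hmono : Monotone fun n : ℕ => {ω | T ω ≤ a - 1 / (n + 1)} := by
    intro m n hmn ω hω
    simp only [mem_setOf_eq] at *
    have h1 : (1:ℝ) / (n + 1) ≤ 1 / (m + 1) := by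
      apply one_div_le_one_div_of_le (by positivity)
      have : (m:ℝ) ≤ n := Nat.cast_le.mpr hmn
      linarith
    linarith
  have htend := tendsto_measure_iUnion_atTop (μ := μ) hmono
  rw [← hU] at htend
  have hfin : μ {ω | T ω < a} ≠ ⊤ := measure_ne_top μ _
  have htR : Filter.Tendsto (fun n : ℕ => (μ {ω | T ω ≤ a - 1 / (n + 1)}).toReal)
      Filter.atTop (nhds (μ {ω | T ω < a}).toReal) :=
    (ENNReal.tendsto_toReal hfin).comp htend
  have htR' : Filter.Tendsto (fun n : ℕ => (1 / Real.pi) * Real.arctan (a - 1 / (n + 1)) + 1 / 2)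
      Filter.atTop (nhds ((1 / Real.pi) * Real.arctan a + 1 / 2)) := by
    have h1 : Filter.Tendsto (fun n : ℕ => a - 1 / ((n:ℝ) + 1)) Filter.atTop (nhds a) := by
      have : Filter.Tendsto (fun n : ℕ => 1 / ((n:ℝ) + 1)) Filter.atTop (nhds 0) :=
        tendsto_one_div_add_atTop_nhds_zero_nat
      have := (tendsto_const_nhds (x := a) (f := Filter.atTop (α := ℕ))).sub this
      simpa using this
    exact (((Real.continuous_arctan.tendsto a).comp h1).const_mul _).add tendsto_const_nhds
  have : ∀ n : ℕ, (μ {ω | T ω ≤ a - 1 / (n + 1)}).toReal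
      = (1 / Real.pi) * Real.arctan (a - 1 / (n + 1)) + 1 / 2 := fun n => hC _
  simp only [this] at htR
  exact tendsto_nhds_unique htR htR'

/-- If `T` is a standard Cauchy random variable, with distribution
function `C x = (1/π) arctan x + 1/2`, then `|T|` is InvSub: the function
`x ↦ 1 - F_{|T|} (1/x) = 1 - (2/π) arctan (1/x)` is subadditive on `(0,∞)`. -/
theorem stmt17 {Ω : Type*} [MeasurableSpace Ω] (μ : Measure Ω) [IsProbabilityMeasure μ]
    (T : Ω → ℝ) (hT : Measurable T)
    (hC : ∀ x : ℝ, (μ {ω | T ω ≤ x}).toReal = (1 / Real.pi) * Real.arctan x + 1 / 2)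
    (G : ℝ → ℝ) (hG : ∀ x, G x = (μ {ω | |T ω| ≤ x}).toReal) :
    (∀ x : ℝ, 0 ≤ x → G x = (2 / Real.pi) * Real.arctan x) ∧
    (∀ x y : ℝ, 0 < x → 0 < y →
      1 - G (1 / (x + y)) ≤ (1 - G (1 / x)) + (1 - G (1 / y))) := by
  have hpi := Real.pi_pos
  have hGval : ∀ x : ℝ, 0 ≤ x → G x = (2 / Real.pi) * Real.arctan x := by
    intro x hx
    have hset : {ω | |T ω| ≤ x} = {ω | T ω ≤ x} \ {ω | T ω < -x} := by
      ext ω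
      simp only [mem_setOf_eq, mem_diff, abs_le, not_lt]
      constructor
      · rintro ⟨h1, h2⟩; exact ⟨h2, h1⟩
      · rintro ⟨h1, h2⟩; exact ⟨h2, h1⟩
    have hsub : {ω | T ω < -x} ⊆ {ω | T ω ≤ x} := fun ω h => by
      simp only [mem_setOf_eq] at *; linarith
    have hmeas : MeasurableSet {ω | T ω < -x} := hT measurableSet_Iio
    rw [hG, hset, measure_diff hsub hmeas.nullMeasurableSet (measure_ne_top μ _),
      ENNReal.toReal_sub_of_le (measure_mono hsub) (measure_ne_top μ _),
      hC, lt_cdf μ T hT hC, Real.arctan_neg]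
    ring
  refine ⟨hGval, fun x y hx hy => ?_⟩
  have key : ∀ z : ℝ, 0 < z → 1 - G (1 / z) = (2 / Real.pi) * Real.arctan z := by
    intro z hz
    rw [hGval _ (by positivity), one_div, Real.arctan_inv_of_pos hz]
    field_simp
    ring
  rw [key _ (by positivity), key _ hx, key _ hy, ← mul_add]
  apply mul_le_mul_of_nonneg_left (arctan_subadd hx hy) (by positivity)
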